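/- Let (Q', S, μ') be a fuzzy skill multimap, let Q be a nonempty subset of Q', and let (Q, S, μ) be the submultimap defined by μ(q) = μ'(q) for each q ∈ Q. If (Q', 𝒦') and (Q, 𝒦) are the knowledge structures delineated by (Q', S, μ') and (Q, S, μ) respectively, then 𝒦 = {K' ∩ Q : K' ∈ 𝒦'}, i.e. (Q, 𝒦) is a substructure of (Q', 𝒦') and 𝒦 is the trace of 𝒦' on Q. In particular, p(T) = p'(T) ∩ Q for every fuzzy set T on S, where p and p' are the induced problem functions. -/
import Mathlib


/-- A fuzzy set on a set `S` of skills: a function `S → [0,1]`, ordered pointwise. -/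
abbrev FuzzySet (S : Type*) := S → unitInterval

/-- The problem function induced by a fuzzy skill multimap `μ`:
`p(F) = {q | ∃ C ∈ μ(q), C ⊆ F}`. -/
def pfun {Q S : Type*} (μ : Q → Set (FuzzySet S)) (F : FuzzySet S) : Set Q :=
  {q | ∃ C ∈ μ q, C ≤ F}

/-- The knowledge structure delineated by a fuzzy skill multimap `μ`. -/
def delineated {Q S : Type*} (μ : Q → Set (FuzzySet S)) : Set (Set Q) :=
  Set.range (pfun μ)

/-- `𝒦_q = {K ∈ 𝒦 | q ∈ K}`. -/
def Kq {Q : Type*} (𝒦 : Set (Set Q)) (q : Q) : Set (Set Q) := {K ∈ 𝒦 | q ∈ K}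

/-- A knowledge structure is discriminative if `𝒦_q ≠ 𝒦_r` for distinct `q, r`. -/
def Discriminative {Q : Type*} (𝒦 : Set (Set Q)) : Prop :=
  ∀ q r : Q, q ≠ r → Kq 𝒦 q ≠ Kq 𝒦 r

/-- A knowledge structure is bi-discriminative if `𝒦_q ⊄ 𝒦_r` and `𝒦_r ⊄ 𝒦_q`
for distinct `q, r`. -/
def BiDiscriminative {Q : Type*} (𝒦 : Set (Set Q)) : Prop :=
  ∀ q r : Q, q ≠ r → ¬ Kq 𝒦 q ⊆ Kq 𝒦 r ∧ ¬ Kq 𝒦 r ⊆ Kq 𝒦 q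

/-- `μ` is a fuzzy skill multimap: each `μ(q)` is a nonempty family of nonzero fuzzy sets. -/
def FSM {Q S : Type*} (μ : Q → Set (FuzzySet S)) : Prop :=
  ∀ q, (μ q).Nonempty ∧ ∀ C ∈ μ q, C ≠ 0

/-- A molecule: a fuzzy set with exactly one skill of nonzero membership. -/
def Molecule {S : Type*} (T : FuzzySet S) : Prop := ∃! s, T s ≠ 0

/-- A knowledge space: a knowledge structure closed under unions of arbitrary subfamilies. -/
def IsKSpace {Q : Type*} (𝒦 : Set (Set Q)) : Prop :=
  ∅ ∈ 𝒦 ∧ Set.univ ∈ 𝒦 ∧ ∀ 𝒮 ⊆ 𝒦, ⋃₀ 𝒮 ∈ 𝒦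

/-- If `(Q, S, μ)` is the submultimap of `(Q', S, μ')` on a nonempty
subset `Q ⊆ Q'` (with `μ(q) = μ'(q)` for `q ∈ Q`), then the delineated structure `𝒦`
is the trace of `𝒦'` on `Q`, i.e. `𝒦 = {K' ∩ Q : K' ∈ 𝒦'}`, and moreover
`p(T) = p'(T) ∩ Q` for every fuzzy set `T`. -/
theorem stmt_16 {Q' S : Type*} [Nonempty Q'] [Nonempty S]
    (μ' : Q' → Set (FuzzySet S)) (hFSM' : FSM μ')
    (Q : Set Q') (hQ : Q.Nonempty) :
    Set.range (fun F : FuzzySet S => {q ∈ Q | ∃ C ∈ μ' q, C ≤ F}) =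
      (fun K => K ∩ Q) '' delineated μ' ∧
    ∀ T : FuzzySet S, {q ∈ Q | ∃ C ∈ μ' q, C ≤ T} = pfun μ' T ∩ Q := by
  constructor
  · ext K
    constructor
    · rintro ⟨F, rfl⟩
      exact ⟨pfun μ' F, ⟨F, rfl⟩, by ext q; simp [pfun, Set.mem_inter_iff, and_comm]⟩
    · rintro ⟨K', ⟨F, rfl⟩, rfl⟩
      exact ⟨F, by ext q; simp [pfun, Set.mem_inter_iff, and_comm]⟩
  · intro T
    ext q
    simp [pfun, Set.mem_inter_iff, and_comm]
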